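/- arXiv:1906.10287 — 3 statements merged into one kernel-verified Lean document; each statement's English description precedes it below -/
import Mathlib

section
/- Let X be a Banach space, V a normed space, and T₀, T₁ : X → V bounded linear operators. For t ∈ [0,1] set T_t = (1-t)T₀ + tT₁. Suppose there is a constant C > 0 such that ‖x‖_X ≤ C‖T_t x‖_V for all t ∈ [0,1] and all x ∈ X. Then T₀ is surjective if and only if T₁ is surjective. -/
private lemma moc_step
    {X V : Type*} [NormedAddCommGroup X] [NormedSpace ℝ X] [CompleteSpace X]
    [NormedAddCommGroup V] [NormedSpace ℝ V]
    (T₀ T₁ : X →L[ℝ] V) (C : ℝ) (hC : 0 < C)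
    (h : ∀ t ∈ Set.Icc (0:ℝ) 1, ∀ x : X, ‖x‖ ≤ C * ‖((1 - t) • T₀ + t • T₁) x‖)
    {s t : ℝ} (hs : s ∈ Set.Icc (0:ℝ) 1) (ht : t ∈ Set.Icc (0:ℝ) 1)
    (hst : |t - s| * (C * ‖T₁ - T₀‖) < 1)
    (hsurj : Function.Surjective ((1 - s) • T₀ + s • T₁)) :
    Function.Surjective ((1 - t) • T₀ + t • T₁) := by
  set A : X →L[ℝ] V := (1 - s) • T₀ + s • T₁ with hA
  have hbound : ∀ x : X, ‖x‖ ≤ C * ‖A x‖ := h s hs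
  have hinj : Function.Injective A := by
    intro x y hxy
    have : ‖x - y‖ ≤ C * ‖A (x - y)‖ := hbound _
    rw [map_sub, hxy, sub_self, norm_zero, mul_zero] at this
    have := le_antisymm this (norm_nonneg _)
    exact sub_eq_zero.mp (norm_eq_zero.mp this)
  let e : X ≃ₗ[ℝ] V := LinearEquiv.ofBijective (A : X →ₗ[ℝ] V) ⟨hinj, hsurj⟩
  have heA : ∀ v : V, A (e.symm v) = v := fun v => e.apply_symm_apply v
  have hesymm_bound : ∀ v : V, ‖e.symm v‖ ≤ C * ‖v‖ := by
    intro v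
    calc ‖e.symm v‖ ≤ C * ‖A (e.symm v)‖ := hbound _
    _ = C * ‖v‖ := by rw [heA]
  let B : X →L[ℝ] X :=
    (e.symm.toLinearMap.comp ((T₁ - T₀) : X →ₗ[ℝ] V)).mkContinuous (C * ‖T₁ - T₀‖)
      (by
        intro x
        calc ‖e.symm ((T₁ - T₀) x)‖ ≤ C * ‖(T₁ - T₀) x‖ := hesymm_bound _
        _ ≤ C * (‖T₁ - T₀‖ * ‖x‖) := by
            exact mul_le_mul_of_nonneg_left ((T₁ - T₀).le_opNorm x) hC.le
        _ = C * ‖T₁ - T₀‖ * ‖x‖ := by ring)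
  have hB : ‖B‖ ≤ C * ‖T₁ - T₀‖ :=
    LinearMap.mkContinuous_norm_le _ (by positivity) _
  have hBapp : ∀ x, A (B x) = (T₁ - T₀) x := fun x => heA _
  have hnorm : ‖-((t - s) • B)‖ < 1 := by
    rw [norm_neg]
    calc ‖(t - s) • B‖ ≤ |t - s| * ‖B‖ := by
          rw [← Real.norm_eq_abs]; exact norm_smul_le (t - s) B
    _ ≤ |t - s| * (C * ‖T₁ - T₀‖) := mul_le_mul_of_nonneg_left hB (abs_nonneg _)
    _ < 1 := hst
  let u : (X →L[ℝ] X)ˣ := Units.oneSub (-((t - s) • B)) hnorm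
  have huval : (u : X →L[ℝ] X) = 1 + (t - s) • B := by
    show 1 - (-((t - s) • B)) = _
    rw [sub_neg_eq_add]
  have hcomp : ∀ x : X, ((1 - t) • T₀ + t • T₁) x = A ((u : X →L[ℝ] X) x) := by
    intro x
    rw [huval]
    simp only [ContinuousLinearMap.add_apply, ContinuousLinearMap.one_apply,
      ContinuousLinearMap.smul_apply, map_add, map_smul, hBapp,
      ContinuousLinearMap.sub_apply]
    simp only [hA, ContinuousLinearMap.add_apply, ContinuousLinearMap.smul_apply]
    module
  intro v
  refine ⟨(↑u⁻¹ : X →L[ℝ] X) (e.symm v), ?_⟩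
  rw [hcomp]
  have : (u : X →L[ℝ] X) ((↑u⁻¹ : X →L[ℝ] X) (e.symm v)) = e.symm v := by
    have h1 : (u : X →L[ℝ] X) * (↑u⁻¹ : X →L[ℝ] X) = 1 := u.mul_inv
    calc (u : X →L[ℝ] X) ((↑u⁻¹ : X →L[ℝ] X) (e.symm v))
        = ((u : X →L[ℝ] X) * (↑u⁻¹ : X →L[ℝ] X)) (e.symm v) := rfl
    _ = e.symm v := by rw [h1]; rfl
  rw [this, heA]

private lemma moc_dir
    {X V : Type*} [NormedAddCommGroup X] [NormedSpace ℝ X] [CompleteSpace X]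
    [NormedAddCommGroup V] [NormedSpace ℝ V]
    (T₀ T₁ : X →L[ℝ] V) (C : ℝ) (hC : 0 < C)
    (h : ∀ t ∈ Set.Icc (0:ℝ) 1, ∀ x : X, ‖x‖ ≤ C * ‖((1 - t) • T₀ + t • T₁) x‖)
    (h0 : Function.Surjective T₀) : Function.Surjective T₁ := by
  set δ : ℝ := 1 / (C * (‖T₁ - T₀‖ + 1)) with hδdef
  have hδpos : 0 < δ := by positivity
  have hδ : δ * (C * ‖T₁ - T₀‖) < 1 := by
    rw [hδdef, div_mul_eq_mul_div, one_mul, div_lt_one (by positivity)]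
    nlinarith [norm_nonneg (T₁ - T₀)]
  have key : ∀ n : ℕ, Function.Surjective
      ((1 - min (n * δ) 1) • T₀ + (min (n * δ) 1) • T₁) := by
    intro n
    induction n with
    | zero =>
      simpa using h0
    | succ n ih =>
      have hsmem : min (n * δ) 1 ∈ Set.Icc (0:ℝ) 1 :=
        ⟨le_min (by positivity) zero_le_one, min_le_right _ _⟩
      have htmem : min ((n + 1 : ℕ) * δ) 1 ∈ Set.Icc (0:ℝ) 1 :=
        ⟨le_min (by positivity) zero_le_one, min_le_right _ _⟩
      refine moc_step T₀ T₁ C hC h hsmem htmem ?_ ih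
      have hle : min ((n + 1 : ℕ) * δ) 1 - min (n * δ) 1 ≤ δ := by
        rcases le_or_gt ((n : ℝ) * δ) 1 with h1 | h1
        · rw [min_eq_left h1]
          have : min ((n + 1 : ℕ) * δ) 1 ≤ (n + 1 : ℕ) * δ := min_le_left _ _
          push_cast at this ⊢
          nlinarith
        · rw [min_eq_right h1.le, min_eq_right (by push_cast; nlinarith)]
          linarith
      have hge : (0:ℝ) ≤ min ((n + 1 : ℕ) * δ) 1 - min (n * δ) 1 := by
        have : (n : ℝ) * δ ≤ (n + 1 : ℕ) * δ := by push_cast; nlinarith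
        have := min_le_min this (le_refl (1:ℝ))
        linarith
      calc |min ((n + 1 : ℕ) * δ) 1 - min (n * δ) 1| * (C * ‖T₁ - T₀‖)
          ≤ δ * (C * ‖T₁ - T₀‖) := by
            apply mul_le_mul_of_nonneg_right _ (by positivity)
            rwa [abs_of_nonneg hge]
      _ < 1 := hδ
  obtain ⟨n, hn⟩ := exists_nat_ge (1 / δ)
  have hmin : min ((n : ℝ) * δ) 1 = 1 := by
    rw [min_eq_right]
    rw [div_le_iff₀ hδpos] at hn
    linarith
  have := key n
  rw [hmin] at this
  simpa using this

/-- The method of continuity: if `T₀, T₁ : X → V` are bounded linear operators from a Banach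
space to a normed space, `T_t = (1-t)T₀ + tT₁`, and `‖x‖ ≤ C‖T_t x‖` uniformly in `t ∈ [0,1]`,
then `T₀` is surjective iff `T₁` is surjective. -/
theorem method_of_continuity
    {X V : Type*} [NormedAddCommGroup X] [NormedSpace ℝ X] [CompleteSpace X]
    [NormedAddCommGroup V] [NormedSpace ℝ V]
    (T₀ T₁ : X →L[ℝ] V) (C : ℝ) (hC : 0 < C)
    (h : ∀ t ∈ Set.Icc (0:ℝ) 1, ∀ x : X, ‖x‖ ≤ C * ‖((1 - t) • T₀ + t • T₁) x‖) :
    Function.Surjective T₀ ↔ Function.Surjective T₁ := by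
  have h' : ∀ t ∈ Set.Icc (0:ℝ) 1, ∀ x : X, ‖x‖ ≤ C * ‖((1 - t) • T₁ + t • T₀) x‖ := by
    intro t ht x
    have h1t : 1 - t ∈ Set.Icc (0:ℝ) 1 := ⟨by linarith [ht.2], by linarith [ht.1]⟩
    have := h (1 - t) h1t x
    have heq : ((1 - (1 - t)) • T₀ + (1 - t) • T₁) x = ((1 - t) • T₁ + t • T₀) x := by
      simp only [ContinuousLinearMap.add_apply, ContinuousLinearMap.smul_apply]
      module
    rwa [heq] at this
  constructor
  · exact moc_dir T₀ T₁ C hC h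
  · exact moc_dir T₁ T₀ C hC h'
end

section
/- For a > 0 and s ∈ (0,1), the function G_a(η) = η^s/(η^s + a) defined for η > 0 satisfies, for every natural number n, the bound |G_a^{(n)}(η)| ≤ C η^{-n} for all η > 0, where C depends only on n, s, and a. -/
open Real

/-- For `a > 0` and `s ∈ (0,1)`, the function `G_a(η) = η^s/(η^s + a)` on `(0,∞)` satisfies
`|G_a^{(n)}(η)| ≤ C η^{-n}` for every `n`, with `C = C(n,s,a)`. -/
theorem G_derivative_bound (a s : ℝ) (ha : 0 < a) (hs : s ∈ Set.Ioo (0:ℝ) 1) (n : ℕ) :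
    ∃ C > 0, ∀ η : ℝ, 0 < η →
      |iteratedDeriv n (fun t : ℝ => t ^ s / (t ^ s + a)) η| ≤ C * η ^ (-(n : ℝ)) := by
  set G : ℝ → ℝ := fun t => t ^ s / (t ^ s + a) with hGdef
  have hden : ∀ η : ℝ, 0 < η → 0 < η ^ s + a := fun η hη =>
    add_pos (Real.rpow_pos_of_pos hη s) ha
  have hG' : ∀ η : ℝ, 0 < η → HasDerivAt G (s * G η * (1 - G η) / η) η := by
    intro η hη
    have h1 : HasDerivAt (fun t : ℝ => t ^ s) (s * η ^ (s - 1)) η := by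
      simpa using (Real.hasDerivAt_rpow_const (p := s) (Or.inl hη.ne'))
    have h2 : HasDerivAt (fun t : ℝ => t ^ s + a) (s * η ^ (s - 1)) η := h1.add_const a
    have h3 := h1.div h2 (hden η hη).ne'
    refine HasDerivAt.congr_deriv (f := G) h3 ?_
    have hηs : η ^ (s - 1) = η ^ s / η := by
      rw [Real.rpow_sub hη, Real.rpow_one]
    have h4 : η ^ s + a ≠ 0 := (hden η hη).ne'
    rw [hGdef]
    rw [hηs]
    field_simp [hηs]
  have key : ∀ m : ℕ, ∃ P : Polynomial ℝ, ∀ η : ℝ, 0 < η →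
      iteratedDeriv m G η = η ^ (-(m : ℤ)) * P.eval (G η) := by
    intro m
    induction m with
    | zero => exact ⟨Polynomial.X, fun η hη => by simp⟩
    | succ k ih =>
      obtain ⟨P, hP⟩ := ih
      refine ⟨(-(k : ℝ)) • P +
        Polynomial.C s * (Polynomial.X * (1 - Polynomial.X)) * Polynomial.derivative P,
        fun η hη => ?_⟩
      rw [iteratedDeriv_succ]
      have hder : deriv (iteratedDeriv k G) η
          = deriv (fun t => t ^ (-(k : ℤ)) * P.eval (G t)) η := by
        apply Filter.EventuallyEq.deriv_eq
        exact Filter.eventuallyEq_of_mem (Ioi_mem_nhds hη) fun t ht => hP t ht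
      rw [hder]
      have h1 := hasDerivAt_zpow (-(k : ℤ)) η (Or.inl hη.ne')
      have h2 : HasDerivAt (fun t : ℝ => P.eval (G t))
          ((Polynomial.derivative P).eval (G η) * (s * G η * (1 - G η) / η)) η :=
        (P.hasDerivAt (G η)).comp η (hG' η hη)
      rw [HasDerivAt.deriv (f := fun t => t ^ (-(k : ℤ)) * P.eval (G t)) (h1.mul h2)]
      have e1 : η ^ (-(k : ℤ) - 1) = η ^ (-((k + 1 : ℕ) : ℤ)) := by
        congr 1; push_cast; ring
      have e2 : η ^ (-(k : ℤ)) = η ^ (-((k + 1 : ℕ) : ℤ)) * η := by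
        rw [show (-(k : ℤ)) = -((k + 1 : ℕ) : ℤ) + 1 by push_cast; ring,
          zpow_add₀ hη.ne', zpow_one]
      rw [e1, e2]
      simp only [Polynomial.eval_add, Polynomial.eval_mul, Polynomial.eval_smul,
        Polynomial.eval_sub, Polynomial.eval_one, Polynomial.eval_X, Polynomial.eval_C,
        smul_eq_mul]
      field_simp
      push_cast
      ring
  obtain ⟨P, hP⟩ := key n
  obtain ⟨C, hC⟩ := (isCompact_Icc : IsCompact (Set.Icc (0:ℝ) 1)).exists_bound_of_continuousOn
    (P.continuous.continuousOn)
  refine ⟨max C 1, lt_of_lt_of_le one_pos (le_max_right _ _), fun η hη => ?_⟩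
  have hG01 : G η ∈ Set.Icc (0:ℝ) 1 := by
    constructor
    · exact div_nonneg (Real.rpow_pos_of_pos hη s).le (hden η hη).le
    · exact (div_le_one (hden η hη)).mpr (le_add_of_nonneg_right ha.le)
  have hzpow : η ^ (-(n : ℝ)) = η ^ (-(n : ℤ)) := by
    rw [← Real.rpow_intCast]
    push_cast
    ring_nf
  rw [hP η hη, hzpow, abs_mul]
  have hpos : 0 < η ^ (-(n : ℤ)) := zpow_pos hη _
  rw [abs_of_pos hpos, mul_comm]
  gcongr
  calc |P.eval (G η)| = ‖P.eval (G η)‖ := rfl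
    _ ≤ C := hC _ hG01
    _ ≤ max C 1 := le_max_left _ _
end

section
/- For s ∈ (0,1), the symbol m(ξ) = (4π²|ξ|²/(1 + 4π²|ξ|²))^s is bounded by 1 on ℝ^d, and the symbol m₂(ξ) = ℓ₂(4π²|ξ|²)^s / ((4π²|ξ|²)^s(ℓ₁+ℓ₂) + λ) (with ℓ₁, ℓ₂, λ > 0) satisfies, for every multi-index β with entries in {0,1}, the Marcinkiewicz-type bound |∂_β m₂(ξ)| ≤ C ∏_{j=1}^d |ξ_j|^{-β_j} for all ξ with nonzero coordinates, where C depends on d, s, ℓ₁, ℓ₂, λ, β. -/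
open Real

namespace Marc

inductive Good (a b s : ℝ) : ℕ → (ℝ → ℝ) → Prop
  | mono (k : ℕ) (coef p μ : ℝ) (hμ : 0 ≤ μ) (hp1 : -(k : ℝ) ≤ p) (hp2 : p ≤ μ * s - k) :
      Good a b s k (fun t => coef * t ^ p * (a * t ^ s + b) ^ (-μ))
  | add (k : ℕ) (f g : ℝ → ℝ) (hf : Good a b s k f) (hg : Good a b s k g) :
      Good a b s k (fun t => f t + g t)

lemma Good.deriv {a b s : ℝ} (ha : 0 < a) (hb : 0 < b) (hs : 0 < s)
    {k : ℕ} {f : ℝ → ℝ} (h : Good a b s k f) :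
    ∃ f', Good a b s (k + 1) f' ∧ ∀ t, 0 < t → HasDerivAt f (f' t) t := by
  induction h with
  | mono coef p μ hμ hp1 hp2 =>
      refine ⟨fun t => (coef * p) * t ^ (p - 1) * (a * t ^ s + b) ^ (-μ)
          + (coef * (-μ) * (a * s)) * t ^ (p + s - 1) * (a * t ^ s + b) ^ (-(μ + 1)), ?_, ?_⟩
      · refine Good.add _ _ _ ?_ ?_
        · exact Good.mono _ _ _ _ hμ (by push_cast; linarith) (by push_cast; linarith)
        · exact Good.mono _ _ _ _ (by linarith) (by push_cast; linarith)
            (by push_cast; linarith)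
      · intro t ht
        have hw : 0 < a * t ^ s + b := by positivity
        have h1 : HasDerivAt (fun t : ℝ => t ^ p) (p * t ^ (p - 1)) t :=
          Real.hasDerivAt_rpow_const (Or.inl ht.ne')
        have h2 : HasDerivAt (fun t : ℝ => a * t ^ s + b) (a * (s * t ^ (s - 1))) t :=
          ((Real.hasDerivAt_rpow_const (p := s) (Or.inl ht.ne')).const_mul a).add_const b
        have h3 : HasDerivAt (fun t : ℝ => (a * t ^ s + b) ^ (-μ))
            (a * (s * t ^ (s - 1)) * (-μ) * (a * t ^ s + b) ^ (-μ - 1)) t :=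
          h2.rpow_const (Or.inl hw.ne')
        have h4 : HasDerivAt (fun t : ℝ => coef * t ^ p * (a * t ^ s + b) ^ (-μ)) _ t :=
          (h1.const_mul coef).mul h3
        convert h4 using 1
        simp only [show -(μ + 1) = -μ - 1 by ring, show (p + s - 1 : ℝ) = p + (s - 1) by ring,
          Real.rpow_add ht]
        ring
  | add f g hf hg ihf ihg =>
      obtain ⟨f', hf', hdf⟩ := ihf
      obtain ⟨g', hg', hdg⟩ := ihg
      exact ⟨fun t => f' t + g' t, Good.add _ _ _ hf' hg',
        fun t ht => (hdf t ht).add (hdg t ht)⟩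


lemma Good.bound {a b s : ℝ} (ha : 0 < a) (hb : 0 < b) (hs : 0 < s)
    {k : ℕ} {f : ℝ → ℝ} (h : Good a b s k f) :
    ∃ C, 0 < C ∧ ∀ t, 0 < t → |f t| ≤ C * t ^ (-(k : ℝ)) := by
  induction h with
  | mono coef p μ hμ hp1 hp2 =>
      refine ⟨|coef| * (a ^ (-μ) + b ^ (-μ)) + 1, by positivity, ?_⟩
      intro t ht
      have hw : 0 < a * t ^ s + b := by positivity
      have habs : |coef * t ^ p * (a * t ^ s + b) ^ (-μ)|
          = |coef| * (t ^ p * (a * t ^ s + b) ^ (-μ)) := by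
        rw [abs_mul, abs_mul, abs_of_nonneg (Real.rpow_nonneg ht.le _),
          abs_of_nonneg (Real.rpow_nonneg hw.le _), mul_assoc]
      have core : t ^ p * (a * t ^ s + b) ^ (-μ) ≤ (a ^ (-μ) + b ^ (-μ)) * t ^ (-(k:ℝ)) := by
        rcases le_total 1 t with ht1 | ht1
        · have hwa : (a * t ^ s + b) ^ (-μ) ≤ (a * t ^ s) ^ (-μ) :=
            Real.rpow_le_rpow_of_nonpos (by positivity) (by linarith) (by linarith)
          have e1 : (a * t ^ s) ^ (-μ) = a ^ (-μ) * t ^ (s * -μ) := by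
            rw [Real.mul_rpow ha.le (Real.rpow_nonneg ht.le _), ← Real.rpow_mul ht.le]
          have e2 : t ^ p * t ^ (s * -μ) = t ^ (p + s * -μ) := (Real.rpow_add ht _ _).symm
          have e3 : t ^ (p + s * -μ) ≤ t ^ (-(k:ℝ)) := by
            apply Real.rpow_le_rpow_of_exponent_le ht1
            have hc : s * μ = μ * s := mul_comm s μ
            linarith [hp2]
          calc t ^ p * (a * t ^ s + b) ^ (-μ)
              ≤ t ^ p * (a ^ (-μ) * t ^ (s * -μ)) := by
                rw [← e1]
                exact mul_le_mul_of_nonneg_left hwa (Real.rpow_nonneg ht.le _)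
            _ = a ^ (-μ) * (t ^ p * t ^ (s * -μ)) := by ring
            _ = a ^ (-μ) * t ^ (p + s * -μ) := by rw [e2]
            _ ≤ a ^ (-μ) * t ^ (-(k:ℝ)) :=
                mul_le_mul_of_nonneg_left e3 (Real.rpow_nonneg ha.le _)
            _ ≤ (a ^ (-μ) + b ^ (-μ)) * t ^ (-(k:ℝ)) := by
                have : (0:ℝ) ≤ b ^ (-μ) := Real.rpow_nonneg hb.le _
                have : (0:ℝ) ≤ t ^ (-(k:ℝ)) := Real.rpow_nonneg ht.le _
                nlinarith [Real.rpow_nonneg hb.le (-μ), Real.rpow_nonneg ht.le (-(k:ℝ))]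
        · have hwb : (a * t ^ s + b) ^ (-μ) ≤ b ^ (-μ) :=
            Real.rpow_le_rpow_of_nonpos hb (by linarith [mul_nonneg ha.le (Real.rpow_nonneg ht.le s)]) (by linarith)
          have htp : t ^ p ≤ t ^ (-(k:ℝ)) :=
            Real.rpow_le_rpow_of_exponent_ge ht ht1 hp1
          calc t ^ p * (a * t ^ s + b) ^ (-μ)
              ≤ t ^ p * b ^ (-μ) := mul_le_mul_of_nonneg_left hwb (Real.rpow_nonneg ht.le _)
            _ ≤ t ^ (-(k:ℝ)) * b ^ (-μ) :=
                mul_le_mul_of_nonneg_right htp (Real.rpow_nonneg hb.le _)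
            _ ≤ (a ^ (-μ) + b ^ (-μ)) * t ^ (-(k:ℝ)) := by
                nlinarith [Real.rpow_nonneg ha.le (-μ), Real.rpow_nonneg ht.le (-(k:ℝ))]
      calc |coef * t ^ p * (a * t ^ s + b) ^ (-μ)|
          = |coef| * (t ^ p * (a * t ^ s + b) ^ (-μ)) := habs
        _ ≤ |coef| * ((a ^ (-μ) + b ^ (-μ)) * t ^ (-(k:ℝ))) :=
            mul_le_mul_of_nonneg_left core (abs_nonneg _)
        _ ≤ (|coef| * (a ^ (-μ) + b ^ (-μ)) + 1) * t ^ (-(k:ℝ)) := by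
            nlinarith [Real.rpow_nonneg ht.le (-(k:ℝ))]
  | add f g hf hg ihf ihg =>
      obtain ⟨C1, hC1, h1⟩ := ihf
      obtain ⟨C2, hC2, h2⟩ := ihg
      refine ⟨C1 + C2, by linarith, fun t ht => ?_⟩
      calc |f t + g t| ≤ |f t| + |g t| := abs_add_le _ _
        _ ≤ C1 * t ^ (-(k:ℝ)) + C2 * t ^ (-(k:ℝ)) := add_le_add (h1 t ht) (h2 t ht)
        _ = (C1 + C2) * t ^ (-(k:ℝ)) := by ring

lemma prod_hasFDerivAt {d : ℕ} (L : List (Fin d)) (ζ : EuclideanSpace ℝ (Fin d)) :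
    ∃ D : EuclideanSpace ℝ (Fin d) →L[ℝ] ℝ,
      HasFDerivAt (fun x : EuclideanSpace ℝ (Fin d) => (L.map (fun j => 2 * x j)).prod) D ζ ∧
      ∀ i, i ∉ L → D (EuclideanSpace.single i 1) = 0 := by
  induction L with
  | nil =>
      refine ⟨0, ?_, fun _ _ => rfl⟩
      simpa using hasFDerivAt_const (1 : ℝ) ζ
  | cons j L ih =>
      obtain ⟨D, hD, hD0⟩ := ih
      have hj : HasFDerivAt (fun x : EuclideanSpace ℝ (Fin d) => 2 * x j)
          ((2 : ℝ) • (EuclideanSpace.proj j : EuclideanSpace ℝ (Fin d) →L[ℝ] ℝ)) ζ :=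
        (EuclideanSpace.proj j : EuclideanSpace ℝ (Fin d) →L[ℝ] ℝ).hasFDerivAt.const_mul 2
      have hmul := hj.mul hD
      refine ⟨(2 * ζ j) • D + ((List.map (fun j' => 2 * ζ j') L).prod : ℝ) •
          ((2:ℝ) • (EuclideanSpace.proj j : EuclideanSpace ℝ (Fin d) →L[ℝ] ℝ)), ?_, ?_⟩
      · exact hmul
      · intro i hi
        have hij : j ≠ i := fun h => hi (h ▸ List.mem_cons_self)
        have hiL : i ∉ L := fun h => hi (List.mem_cons_of_mem _ h)
        simp [hD0 i hiL, EuclideanSpace.single_apply, hij]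

lemma key {d : ℕ} {s ℓ₁ ℓ₂ lam : ℝ} (hs : 0 < s) (h1 : 0 < ℓ₁) (h2 : 0 < ℓ₂)
    (hlam : 0 < lam) :
    ∀ L : List (Fin d), L.Nodup →
    ∃ f : ℝ → ℝ, Good ((4 * π ^ 2) ^ s * (ℓ₁ + ℓ₂)) lam s L.length f ∧
      ∀ ζ : EuclideanSpace ℝ (Fin d), ζ ≠ 0 →
        (List.foldr
          (fun (j : Fin d) (g : EuclideanSpace ℝ (Fin d) → ℝ) =>
            fun ζ => fderiv ℝ g ζ (EuclideanSpace.single j 1))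
          (fun ζ : EuclideanSpace ℝ (Fin d) =>
            ℓ₂ * (4 * Real.pi ^ 2 * ‖ζ‖ ^ 2) ^ s /
              ((4 * Real.pi ^ 2 * ‖ζ‖ ^ 2) ^ s * (ℓ₁ + ℓ₂) + lam)) L) ζ
          = f (‖ζ‖ ^ 2) * (L.map (fun j => 2 * ζ j)).prod := by
  have hπ : (0:ℝ) < 4 * π ^ 2 := by positivity
  have ha : 0 < (4 * π ^ 2) ^ s * (ℓ₁ + ℓ₂) := by positivity
  intro L
  induction L with
  | nil =>
      intro _
      refine ⟨fun t => ℓ₂ / (ℓ₁ + ℓ₂) * t ^ (0:ℝ) *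
            ((4 * π ^ 2) ^ s * (ℓ₁ + ℓ₂) * t ^ s + lam) ^ (-(0:ℝ))
          + (-(ℓ₂ * lam / (ℓ₁ + ℓ₂))) * t ^ (0:ℝ) *
            ((4 * π ^ 2) ^ s * (ℓ₁ + ℓ₂) * t ^ s + lam) ^ (-(1:ℝ)), ?_, ?_⟩
      · exact Good.add _ _ _
          (Good.mono _ _ _ _ le_rfl (by norm_num) (by norm_num))
          (Good.mono _ _ _ _ (by norm_num) (by norm_num) (by norm_num; linarith))
      · intro ζ hζ
        have ht : (0:ℝ) < ‖ζ‖ ^ 2 := pow_pos (norm_pos_iff.mpr hζ) 2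
        have hu : (4 * π ^ 2 * ‖ζ‖ ^ 2) ^ s = (4 * π ^ 2) ^ s * (‖ζ‖ ^ 2) ^ s :=
          Real.mul_rpow hπ.le ht.le
        have hts : (0:ℝ) < (‖ζ‖ ^ 2) ^ s := Real.rpow_pos_of_pos ht s
        have hw : (4 * π ^ 2) ^ s * (ℓ₁ + ℓ₂) * (‖ζ‖ ^ 2) ^ s + lam ≠ 0 := by positivity
        have hden : (4 * π ^ 2) ^ s * (‖ζ‖ ^ 2) ^ s * (ℓ₁ + ℓ₂) + lam ≠ 0 := by positivity
        simp only [List.foldr_nil, List.map_nil, List.prod_nil, mul_one, hu,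
          neg_zero, Real.rpow_zero, Real.rpow_neg_one, mul_one]
        field_simp
        ring
  | cons j L ih =>
      intro hnd
      obtain ⟨f, hGood, hEq⟩ := ih (List.nodup_cons.mp hnd).2
      obtain ⟨f', hGood', hder⟩ := hGood.deriv ha hlam hs
      refine ⟨f', by simpa using hGood', ?_⟩
      intro ζ hζ
      have htq : (0:ℝ) < ‖ζ‖ ^ 2 := pow_pos (norm_pos_iff.mpr hζ) 2
      obtain ⟨DP, hDP, hDP0⟩ := prod_hasFDerivAt L ζ
      have hq : HasFDerivAt (fun x : EuclideanSpace ℝ (Fin d) => ‖x‖ ^ 2)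
          (2 • (innerSL ℝ ζ)) ζ := (hasStrictFDerivAt_norm_sq ζ).hasFDerivAt
      have hfc : HasFDerivAt (fun x : EuclideanSpace ℝ (Fin d) => f (‖x‖ ^ 2))
          (f' (‖ζ‖ ^ 2) • (2 • (innerSL ℝ ζ))) ζ :=
        (hder _ htq).comp_hasFDerivAt ζ hq
      have hN : HasFDerivAt (fun x : EuclideanSpace ℝ (Fin d) =>
            f (‖x‖ ^ 2) * (L.map (fun j' => 2 * x j')).prod) _ ζ := hfc.mul hDP
      have hnbhd : (List.foldr
            (fun (j : Fin d) (g : EuclideanSpace ℝ (Fin d) → ℝ) =>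
              fun ζ => fderiv ℝ g ζ (EuclideanSpace.single j 1))
            (fun ζ : EuclideanSpace ℝ (Fin d) =>
              ℓ₂ * (4 * Real.pi ^ 2 * ‖ζ‖ ^ 2) ^ s /
                ((4 * Real.pi ^ 2 * ‖ζ‖ ^ 2) ^ s * (ℓ₁ + ℓ₂) + lam)) L)
          =ᶠ[nhds ζ]
          (fun x => f (‖x‖ ^ 2) * (L.map (fun j' => 2 * x j')).prod) := by
        filter_upwards [IsOpen.mem_nhds isOpen_ne hζ] with x hx
        exact hEq x hx
      have hjL : j ∉ L := (List.nodup_cons.mp hnd).1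
      rw [List.foldr_cons, hnbhd.fderiv_eq, hN.fderiv]
      simp only [ContinuousLinearMap.add_apply, ContinuousLinearMap.smul_apply,
        hDP0 j hjL, smul_eq_mul, mul_zero, innerSL_apply_apply, List.map_cons, List.prod_cons]
      rw [EuclideanSpace.inner_single_right]
      simp only [RCLike.star_def, conj_trivial, one_mul, smul_eq_mul, zero_add]
      ring

end Marc

/-- The symbol `m(ξ) = (4π²|ξ|²/(1 + 4π²|ξ|²))^s` is bounded by `1`, and the symbol
`m₂(ξ) = ℓ₂(4π²|ξ|²)^s/((4π²|ξ|²)^s(ℓ₁+ℓ₂) + λ)` satisfies the Marcinkiewicz-type bounds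
`|∂_β m₂(ξ)| ≤ C ∏ |ξ_j|^{-β_j}` for every multi-index `β` with entries in `{0,1}` and
every `ξ` with all coordinates nonzero. -/
theorem marcinkiewicz_symbol_bounds
    (d : ℕ) (s ℓ₁ ℓ₂ lam : ℝ) (hs : s ∈ Set.Ioo (0:ℝ) 1)
    (h1 : 0 < ℓ₁) (h2 : 0 < ℓ₂) (hlam : 0 < lam) :
    (∀ ξ : EuclideanSpace ℝ (Fin d),
      |(4 * Real.pi ^ 2 * ‖ξ‖ ^ 2 / (1 + 4 * Real.pi ^ 2 * ‖ξ‖ ^ 2)) ^ s| ≤ 1) ∧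
    (∀ β : Fin d → Bool, ∃ C > 0, ∀ ξ : EuclideanSpace ℝ (Fin d), (∀ j, ξ j ≠ 0) →
      |(List.foldr
          (fun (j : Fin d) (g : EuclideanSpace ℝ (Fin d) → ℝ) =>
            fun ζ => fderiv ℝ g ζ (EuclideanSpace.single j 1))
          (fun ζ : EuclideanSpace ℝ (Fin d) =>
            ℓ₂ * (4 * Real.pi ^ 2 * ‖ζ‖ ^ 2) ^ s /
              ((4 * Real.pi ^ 2 * ‖ζ‖ ^ 2) ^ s * (ℓ₁ + ℓ₂) + lam))
          ((List.finRange d).filter (fun j => β j))) ξ|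
        ≤ C * ∏ j : Fin d, (if β j then |ξ j|⁻¹ else 1)) := by
  constructor
  · intro ξ
    have hx0 : (0:ℝ) ≤ 4 * Real.pi ^ 2 * ‖ξ‖ ^ 2 := by positivity
    have hr0 : (0:ℝ) ≤ 4 * Real.pi ^ 2 * ‖ξ‖ ^ 2 / (1 + 4 * Real.pi ^ 2 * ‖ξ‖ ^ 2) := by
      positivity
    have hr1 : 4 * Real.pi ^ 2 * ‖ξ‖ ^ 2 / (1 + 4 * Real.pi ^ 2 * ‖ξ‖ ^ 2) ≤ 1 := by
      rw [div_le_one (by linarith)]; linarith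
    rw [abs_of_nonneg (Real.rpow_nonneg hr0 s)]
    exact Real.rpow_le_one hr0 hr1 hs.1.le
  · intro β
    have hπ : (0:ℝ) < (4 * Real.pi ^ 2) ^ s * (ℓ₁ + ℓ₂) := by positivity
    have hnd : ((List.finRange d).filter (fun j => β j)).Nodup :=
      (List.nodup_finRange d).filter _
    obtain ⟨f, hGood, hEq⟩ := Marc.key hs.1 h1 h2 hlam _ hnd
    obtain ⟨C, hC, hCb⟩ := hGood.bound hπ hlam hs.1
    set L := (List.finRange d).filter (fun j => β j) with hLdef
    set k := L.length with hk
    refine ⟨C * 2 ^ k, by positivity, ?_⟩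
    intro ξ hcoord
    by_cases hξ : ξ = 0
    · have hd : IsEmpty (Fin d) := by
        by_contra h
        rw [not_isEmpty_iff] at h
        exact hcoord (Classical.arbitrary _) (by rw [hξ]; rfl)
      have hLnil : L = [] := by
        cases hL' : L with
        | nil => rfl
        | cons j t => exact (hd.false j).elim
      have h0 : (4 * Real.pi ^ 2 * ‖ξ‖ ^ 2) ^ s = 0 := by
        rw [hξ]
        norm_num
        exact Real.zero_rpow hs.1.ne'
      rw [hLnil]
      simp only [List.foldr_nil, h0, mul_zero, zero_mul, zero_div, abs_zero]
      positivity
    · have hq : (0:ℝ) < ‖ξ‖ ^ 2 := pow_pos (norm_pos_iff.mpr hξ) 2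
      have hnorm : ‖ξ‖ ^ 2 = ∑ i, ξ i ^ 2 := by
        rw [EuclideanSpace.norm_eq, Real.sq_sqrt (by positivity)]
        simp [Real.norm_eq_abs, sq_abs]
      have hsq : ∀ j : Fin d, ξ j ^ 2 ≤ ‖ξ‖ ^ 2 := by
        intro j
        rw [hnorm]
        exact Finset.single_le_sum (fun i _ => sq_nonneg (ξ i)) (Finset.mem_univ j)
      have hcard : L.toFinset.card = k := List.toFinset_card_of_nodup hnd
      have hprodT : (L.map (fun j => 2 * ξ j)).prod = ∏ j ∈ L.toFinset, (2 * ξ j) :=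
        (List.prod_toFinset _ hnd).symm
      have hqpow : (‖ξ‖ ^ 2) ^ (-(k:ℝ)) = ∏ _j ∈ L.toFinset, (‖ξ‖ ^ 2)⁻¹ := by
        rw [Real.rpow_neg hq.le, Real.rpow_natCast, ← inv_pow, Finset.prod_const, hcard]
      rw [hEq ξ hξ, abs_mul, hprodT, Finset.abs_prod]
      calc |f (‖ξ‖ ^ 2)| * ∏ j ∈ L.toFinset, |2 * ξ j|
          ≤ (C * (‖ξ‖ ^ 2) ^ (-(k:ℝ))) * ∏ j ∈ L.toFinset, |2 * ξ j| := by
            apply mul_le_mul_of_nonneg_right (hCb _ hq)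
            exact Finset.prod_nonneg fun j _ => abs_nonneg _
        _ = C * ∏ j ∈ L.toFinset, ((‖ξ‖ ^ 2)⁻¹ * |2 * ξ j|) := by
            rw [Finset.prod_mul_distrib, hqpow, mul_assoc]
        _ ≤ C * ∏ j ∈ L.toFinset, (2 * |ξ j|⁻¹) := by
            apply mul_le_mul_of_nonneg_left _ hC.le
            apply Finset.prod_le_prod
            · intro j _; positivity
            · intro j _
              have hxj : (0:ℝ) < |ξ j| := abs_pos.mpr (hcoord j)
              have hx2 : |ξ j| ^ 2 ≤ ‖ξ‖ ^ 2 := by rw [sq_abs]; exact hsq j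
              have hinv : (‖ξ‖ ^ 2)⁻¹ ≤ (|ξ j| ^ 2)⁻¹ :=
                inv_anti₀ (pow_pos hxj 2) hx2
              have e : (|ξ j| ^ 2)⁻¹ * |2 * ξ j| = 2 * |ξ j|⁻¹ := by
                rw [abs_mul, abs_two, sq, mul_inv]
                rw [mul_comm (2 : ℝ) |ξ j|, ← mul_assoc, mul_assoc (|ξ j|⁻¹),
                  inv_mul_cancel₀ hxj.ne', mul_one, mul_comm]
              calc (‖ξ‖ ^ 2)⁻¹ * |2 * ξ j| ≤ (|ξ j| ^ 2)⁻¹ * |2 * ξ j| :=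
                    mul_le_mul_of_nonneg_right hinv (abs_nonneg _)
                _ = 2 * |ξ j|⁻¹ := e
        _ = (C * 2 ^ k) * ∏ j ∈ L.toFinset, |ξ j|⁻¹ := by
            rw [Finset.prod_mul_distrib, Finset.prod_const, hcard, mul_assoc]
        _ = (C * 2 ^ k) * ∏ j : Fin d, (if β j then |ξ j|⁻¹ else 1) := by
            congr 1
            rw [hLdef, List.toFinset_filter, List.toFinset_finRange, Finset.prod_filter]
end
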